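/- For the multiplicative update θ_{n+1}(i) = θ_n(i)·(1 + γ_{n+1}·1_{i=J})/(1 + γ_{n+1}·θ_n(J)) with γ_{n+1} > 0, θ_n ∈ Θ, the relative change satisfies |1 − θ_n(i)/θ_{n+1}(i)| ≤ γ_{n+1} and |1 − θ_{n+1}(i)/θ_n(i)| ≤ γ_{n+1} for each i ∈ {1,…,d}. -/

import Mathlib

private lemma aux_rel (γ p q : ℝ) (hq : 0 < q) (h1 : q - p ≤ γ * q) (h2 : p - q ≤ γ * q) :
    |1 - p / q| ≤ γ := by
  have hne : q ≠ 0 := ne_of_gt hq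
  have heq : 1 - p / q = (q - p) / q := by field_simp
  rw [heq, abs_div, abs_of_pos hq, div_le_iff₀ hq]
  rw [abs_le]
  constructor <;> linarith

/-- for the multiplicative update with stepsize `γ > 0`, the relative change
of each weight is at most `γ`. -/
theorem stmt_7 {d : ℕ} (γ : ℝ) (hγ : 0 < γ) (θ : Fin d → ℝ) (J : Fin d)
    (hθpos : ∀ i, 0 < θ i) (hθsum : ∑ i, θ i = 1) :
    ∀ i : Fin d,
      |1 - θ i / (θ i * (1 + γ * (if i = J then (1:ℝ) else 0)) / (1 + γ * θ J))| ≤ γ ∧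
      |1 - (θ i * (1 + γ * (if i = J then (1:ℝ) else 0)) / (1 + γ * θ J)) / θ i| ≤ γ := by
  have hJ1 : θ J ≤ 1 := by
    rw [← hθsum]
    exact Finset.single_le_sum (fun i _ => (hθpos i).le) (Finset.mem_univ J)
  have hJ0 := hθpos J
  intro i
  have hi := hθpos i
  have hb : (0:ℝ) < 1 + γ * θ J := by positivity
  by_cases h : i = J
  · subst h
    rw [if_pos rfl]
    have ha : (0:ℝ) < 1 + γ := by linarith
    have key1 : θ i / (θ i * (1 + γ * 1) / (1 + γ * θ i)) = (1 + γ * θ i) / (1 + γ) := by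
      field_simp
    have key2 : (θ i * (1 + γ * 1) / (1 + γ * θ i)) / θ i = (1 + γ) / (1 + γ * θ i) := by
      field_simp
    rw [key1, key2]
    constructor
    · exact aux_rel γ _ _ ha (by nlinarith [mul_pos hγ hJ0, mul_nonneg (mul_nonneg hγ.le hγ.le) hJ0.le, mul_nonneg hγ.le (sub_nonneg.mpr hJ1)]) (by nlinarith [mul_pos hγ hJ0, mul_nonneg (mul_nonneg hγ.le hγ.le) hJ0.le, mul_nonneg hγ.le (sub_nonneg.mpr hJ1)])
    · exact aux_rel γ _ _ hb (by nlinarith [mul_pos hγ hJ0, mul_nonneg (mul_nonneg hγ.le hγ.le) hJ0.le, mul_nonneg hγ.le (sub_nonneg.mpr hJ1)]) (by nlinarith [mul_pos hγ hJ0, mul_nonneg (mul_nonneg hγ.le hγ.le) hJ0.le, mul_nonneg hγ.le (sub_nonneg.mpr hJ1)])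
  · rw [if_neg h]
    have key1 : θ i / (θ i * (1 + γ * 0) / (1 + γ * θ J)) = (1 + γ * θ J) / 1 := by
      field_simp
      ring
    have key2 : (θ i * (1 + γ * 0) / (1 + γ * θ J)) / θ i = 1 / (1 + γ * θ J) := by
      field_simp
      ring
    rw [key1, key2]
    constructor
    · exact aux_rel γ _ _ one_pos (by nlinarith [mul_pos hγ hJ0, mul_nonneg (mul_nonneg hγ.le hγ.le) hJ0.le, mul_nonneg hγ.le (sub_nonneg.mpr hJ1)]) (by nlinarith [mul_pos hγ hJ0, mul_nonneg (mul_nonneg hγ.le hγ.le) hJ0.le, mul_nonneg hγ.le (sub_nonneg.mpr hJ1)])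
    · exact aux_rel γ _ _ hb (by nlinarith [mul_pos hγ hJ0, mul_nonneg (mul_nonneg hγ.le hγ.le) hJ0.le, mul_nonneg hγ.le (sub_nonneg.mpr hJ1)]) (by nlinarith [mul_pos hγ hJ0, mul_nonneg (mul_nonneg hγ.le hγ.le) hJ0.le, mul_nonneg hγ.le (sub_nonneg.mpr hJ1)])
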